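/- Let C be a self-homothetic attractor as in the context, and let h_∅ := max_{x ∈ B[0,1]} dist(x, C). Then h_∅ ≤ sup_{x ∈ B[0,1] ∖ ⋃_i f_i(B[0,1])} min_i (‖x − t_i‖ − λ_i)/(1 − λ_i), with the convention that the supremum over the empty set is 0. -/

import Mathlib

open Metric Set
open scoped ENNReal

/-- Composition `f_{i₁} ∘ ⋯ ∘ f_{i_k}` of the maps of an IFS along the word `I`. -/
def wordMap {E : Type*} {K : Type*} (f : K → E → E) (I : List K) : E → E :=
  (I.map f).foldl (· ∘ ·) id

/-- Let `C` be the attractor of an IFS of homotheties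
`f_i(x) = λ_i x + t_i` with `λ_i ∈ (0,1)` and `f_i(B[0,1]) = B[t_i, λ_i] ⊆ B[0,1]`.
Then `h_∅ := max_{x ∈ B[0,1]} dist(x,C)` satisfies
`h_∅ ≤ sup_{x ∈ B[0,1] \ ⋃_i f_i(B[0,1])} min_i (‖x - t_i‖ - λ_i)/(1 - λ_i)`
(with the Lean conventions giving the supremum over the empty set the value 0). -/
theorem h_root_le {E : Type*} [NormedAddCommGroup E] [NormedSpace ℝ E]
    [FiniteDimensional ℝ E]
    (m : ℕ) (hm : 0 < m) (lam : Fin m → ℝ) (t : Fin m → E)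
    (hlam : ∀ i, lam i ∈ Set.Ioo (0 : ℝ) 1)
    (hsub : ∀ i, closedBall (t i) (lam i) ⊆ closedBall (0 : E) 1)
    (C : Set E) (hCc : IsCompact C) (hCne : C.Nonempty)
    (hC : C = ⋃ i, (fun x => lam i • x + t i) '' C) :
    (⨆ x ∈ closedBall (0 : E) 1, infDist x C)
      ≤ ⨆ x ∈ (closedBall (0 : E) 1 \ ⋃ i, closedBall (t i) (lam i)),
          ⨅ i, (‖x - t i‖ - lam i) / (1 - lam i) := by
  classical
  set B := closedBall (0 : E) 1 with hBdef
  set F : E → ℝ := fun x => ⨅ i, (‖x - t i‖ - lam i) / (1 - lam i) with hF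
  set D : Set E := B \ ⋃ i, closedBall (t i) (lam i) with hD
  haveI : Nonempty (Fin m) := ⟨⟨0, hm⟩⟩
  have hBc : IsCompact B := isCompact_closedBall 0 1
  have hBne : B.Nonempty := ⟨0, mem_closedBall_self zero_le_one⟩
  obtain ⟨x₀, hx₀B, hmaxOn⟩ := hBc.exists_isMaxOn hBne
    (continuous_infDist_pt C).continuousOn
  set h := infDist x₀ C with hh
  have hh0 : 0 ≤ h := infDist_nonneg
  have hmax : ∀ z ∈ B, infDist z C ≤ h := fun z hz => hmaxOn hz
  -- contraction lemma
  have key : ∀ (i : Fin m) (y : E),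
      infDist (lam i • y + t i) C ≤ lam i * infDist y C := by
    intro i y
    obtain ⟨c, hcC, hc⟩ := hCc.exists_infDist_eq_dist hCne y
    have hmem : lam i • c + t i ∈ C := by
      rw [hC]; exact mem_iUnion.2 ⟨i, ⟨c, hcC, rfl⟩⟩
    calc infDist (lam i • y + t i) C
        ≤ dist (lam i • y + t i) (lam i • c + t i) := infDist_le_dist_of_mem hmem
      _ = lam i * dist y c := by
          rw [dist_eq_norm, dist_eq_norm, add_sub_add_right_eq_sub, ← smul_sub,
            norm_smul, Real.norm_eq_abs, abs_of_pos (hlam i).1]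
      _ = lam i * infDist y C := by rw [hc]
  -- the LHS is at most h
  have lhs_le : (⨆ x ∈ B, infDist x C) ≤ h :=
    Real.iSup_le (fun x => Real.iSup_le (fun hx => hmax x hx) hh0) hh0
  refine lhs_le.trans ?_
  -- the RHS is nonnegative
  have rhs_nonneg : 0 ≤ ⨆ x ∈ D, F x := by
    refine Real.iSup_nonneg fun x => Real.iSup_nonneg fun hx => ?_
    refine Real.iInf_nonneg fun i => ?_
    have hxi : ¬ x ∈ closedBall (t i) (lam i) := fun hmem =>
      hx.2 (mem_iUnion.2 ⟨i, hmem⟩)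
    rw [mem_closedBall_iff_norm] at hxi
    have h1 : 0 < 1 - lam i := by linarith [(hlam i).2]
    exact div_nonneg (by linarith [not_le.mp hxi]) h1.le
  by_cases hcase : x₀ ∈ ⋃ i, closedBall (t i) (lam i)
  · -- x₀ lies in some f_i(B): then h ≤ lam i * h so h = 0
    obtain ⟨i, hx₀i⟩ := mem_iUnion.mp hcase
    have hlp := (hlam i).1
    set y : E := (lam i)⁻¹ • (x₀ - t i) with hy
    have hyB : y ∈ B := by
      rw [hBdef, mem_closedBall_iff_norm, sub_zero, hy, norm_smul,
        Real.norm_eq_abs, abs_of_pos (inv_pos.mpr hlp)]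
      rw [mem_closedBall_iff_norm] at hx₀i
      rw [inv_mul_le_iff₀ hlp, mul_one]
      exact hx₀i
    have hxy : lam i • y + t i = x₀ := by
      rw [hy, smul_inv_smul₀ hlp.ne', sub_add_cancel]
    have : h ≤ lam i * h := by
      calc h = infDist (lam i • y + t i) C := by rw [hxy]
        _ ≤ lam i * infDist y C := key i y
        _ ≤ lam i * h := by
            exact mul_le_mul_of_nonneg_left (hmax y hyB) hlp.le
    have hle0 : h ≤ 0 := by nlinarith [(hlam i).2]
    linarith
  · -- x₀ ∉ ⋃ f_i(B): bound h by F x₀ and F x₀ by the sup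
    have hx₀D : x₀ ∈ D := ⟨hx₀B, hcase⟩
    have hgt : ∀ i, lam i < ‖x₀ - t i‖ := by
      intro i
      by_contra hcon
      exact hcase (mem_iUnion.2 ⟨i, mem_closedBall_iff_norm.2 (not_lt.mp hcon)⟩)
    have hF0 : h ≤ F x₀ := by
      refine le_ciInf fun i => ?_
      have hlp := (hlam i).1
      have hl1 : 0 < 1 - lam i := by linarith [(hlam i).2]
      set r := ‖x₀ - t i‖ with hr
      have hrpos : 0 < r := lt_trans hlp (hgt i)
      set z : E := r⁻¹ • (x₀ - t i) with hz
      have hzB : z ∈ B := by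
        rw [hBdef, mem_closedBall_iff_norm, sub_zero, hz, norm_smul,
          Real.norm_eq_abs, abs_of_pos (inv_pos.mpr hrpos), ← hr,
          inv_mul_cancel₀ hrpos.ne']
      have hdist : dist x₀ (lam i • z + t i) = r - lam i := by
        rw [dist_eq_norm]
        have : x₀ - (lam i • z + t i) = (1 - lam i * r⁻¹) • (x₀ - t i) := by
          rw [hz, smul_smul, sub_smul, one_smul]
          abel
        rw [this, norm_smul, Real.norm_eq_abs, ← hr]
        have hlt : lam i * r⁻¹ < 1 := by
          rw [mul_inv_lt_iff₀ hrpos]; simpa using hgt i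
        rw [abs_of_pos (by linarith)]
        field_simp
      have step : h ≤ (r - lam i) + lam i * h := by
        calc h ≤ dist x₀ (lam i • z + t i) + infDist (lam i • z + t i) C :=
              (infDist_le_infDist_add_dist (y := lam i • z + t i)).trans_eq (add_comm _ _)
          _ ≤ (r - lam i) + lam i * infDist z C := by
              rw [hdist]
              exact add_le_add_right (key i z) _
          _ ≤ (r - lam i) + lam i * h := by
              exact add_le_add_right (mul_le_mul_of_nonneg_left (hmax z hzB) hlp.le) _
      rw [le_div_iff₀ hl1]
      linarith
    -- bounded above
    set i₀ : Fin m := ⟨0, hm⟩ with hi₀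
    set M : ℝ := (1 + ‖t i₀‖) / (1 - lam i₀) with hM
    have hl1₀ : 0 < 1 - lam i₀ := by linarith [(hlam i₀).2]
    have hM0 : 0 ≤ M := div_nonneg (by positivity) hl1₀.le
    have hFle : ∀ x ∈ D, F x ≤ M := by
      intro x hx
      have hbd : BddBelow (range fun i => (‖x - t i‖ - lam i) / (1 - lam i)) :=
        (Set.finite_range _).bddBelow
      refine (ciInf_le hbd i₀).trans ?_
      rw [hM, div_le_div_iff_of_pos_right hl1₀]
      have : ‖x - t i₀‖ ≤ ‖x‖ + ‖t i₀‖ := norm_sub_le x (t i₀)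
      have hxB : ‖x‖ ≤ 1 := by
        have := hx.1; rw [hBdef, mem_closedBall_iff_norm, sub_zero] at this
        exact this
      linarith [(hlam i₀).1]
    have bdd : BddAbove (range fun x => ⨆ _ : x ∈ D, F x) := by
      refine ⟨M, ?_⟩
      rintro v ⟨x, rfl⟩
      exact Real.iSup_le (fun hx => hFle x hx) hM0
    have := le_ciSup bdd x₀
    rw [ciSup_pos hx₀D] at this
    exact hF0.trans this
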